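/- Let v, w, z be nonzero vectors in ℝ^n all of whose coordinates are nonnegative. Denote by cos(x,y) = ⟨x,y⟩/(‖x‖·‖y‖) the cosine similarity of nonzero vectors x and y. Then cos(v,z) ≥ cos(w,z) − √(1 − cos(v,w)²). -/

import Mathlib

open scoped RealInnerProductSpace

/-- Cauchy–Schwarz / Gram inequality for three unit vectors. -/
lemma gram_key {E : Type*} [NormedAddCommGroup E] [InnerProductSpace ℝ E]
    (v w z : E) (hv : ‖v‖ = 1) (hw : ‖w‖ = 1) (hz : ‖z‖ = 1) :
    ⟪v, w⟫ * ⟪w, z⟫ - Real.sqrt (1 - ⟪v, w⟫ ^ 2) * Real.sqrt (1 - ⟪w, z⟫ ^ 2)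
      ≤ ⟪v, z⟫ := by
  set a := ⟪v, w⟫ with ha
  set b := ⟪w, z⟫ with hb
  set p := v - a • w with hp
  set q := z - b • w with hq
  have hwp : ⟪w, w⟫ = 1 := by
    rw [real_inner_self_eq_norm_sq, hw]; norm_num
  have hvw : ⟪w, v⟫ = a := by rw [real_inner_comm]
  have hzw : ⟪w, z⟫ = b := rfl
  have hzb : ⟪z, w⟫ = b := by rw [real_inner_comm]
  have hpq : ⟪p, q⟫ = ⟪v, z⟫ - a * b := by
    simp only [hp, hq, inner_sub_left, inner_sub_right, real_inner_smul_left,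
      real_inner_smul_right, hwp, hvw, hzb]
    ring
  have hpn : ‖p‖ ^ 2 = 1 - a ^ 2 := by
    have := norm_sub_sq_real v (a • w)
    rw [real_inner_smul_right, norm_smul, hw, hv] at this
    simp only [hp, this]
    simp [Real.norm_eq_abs, sq_abs, ← ha]
    ring
  have hqn : ‖q‖ ^ 2 = 1 - b ^ 2 := by
    have := norm_sub_sq_real z (b • w)
    rw [real_inner_smul_right, norm_smul, hw, hz, hzb] at this
    simp only [hq, this]
    simp [Real.norm_eq_abs, sq_abs]
    ring
  have hps : Real.sqrt (1 - a ^ 2) = ‖p‖ := by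
    rw [← hpn, Real.sqrt_sq (norm_nonneg _)]
  have hqs : Real.sqrt (1 - b ^ 2) = ‖q‖ := by
    rw [← hqn, Real.sqrt_sq (norm_nonneg _)]
  have hcs : -(‖p‖ * ‖q‖) ≤ ⟪p, q⟫ := by
    have := abs_real_inner_le_norm p q
    have h2 := neg_abs_le ⟪p, q⟫
    linarith
  rw [hps, hqs]
  rw [hpq] at hcs
  linarith

/-- Pure real algebra: from `c ≥ ab - st` with `s² = 1-a²`, `t² = 1-b²`, deduce `c ≥ b - s`. -/
lemma alg_key (a b c s t : ℝ) (ha0 : 0 ≤ a) (ha1 : a ≤ 1) (hb0 : 0 ≤ b) (hb1 : b ≤ 1)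
    (hc0 : 0 ≤ c) (hs0 : 0 ≤ s) (ht0 : 0 ≤ t)
    (hs2 : s ^ 2 = 1 - a ^ 2) (ht2 : t ^ 2 = 1 - b ^ 2)
    (hkey : a * b - s * t ≤ c) : b - s ≤ c := by
  rcases le_or_gt b s with h | h
  · linarith
  · have hsb : s ^ 2 < b ^ 2 := by
      have := pow_lt_pow_left₀ h hs0 (n := 2) two_ne_zero
      linarith
    have hta2 : t ^ 2 ≤ a ^ 2 := by linarith
    have hta : t ≤ a := le_of_pow_le_pow_left₀ two_ne_zero ha0 hta2
    have h1a : (0:ℝ) ≤ 1 - a := by linarith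
    have h1t : (0:ℝ) ≤ 1 - t := by linarith
    have hbt : b ^ 2 = 1 - t ^ 2 := by linarith
    have e1 : (s * (1 - t)) ^ 2 = (1 - a ^ 2) * (1 - t) ^ 2 := by rw [mul_pow, hs2]
    have e2 : (b * (1 - a)) ^ 2 = (1 - t ^ 2) * (1 - a) ^ 2 := by rw [mul_pow, hbt]
    have hb2 : (b * (1 - a)) ^ 2 ≤ (s * (1 - t)) ^ 2 := by
      rw [e1, e2]
      nlinarith [mul_nonneg (mul_nonneg h1a h1t) (show (0:ℝ) ≤ a - t by linarith)]
    have hbs : b * (1 - a) ≤ s * (1 - t) :=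
      le_of_pow_le_pow_left₀ two_ne_zero (mul_nonneg hs0 h1t) hb2
    nlinarith [hkey, hbs]

/-- Cosine-similarity "transitivity" inequality for nonnegative vectors:
`cos(v,z) ≥ cos(w,z) − √(1 − cos(v,w)²)`. -/
theorem cosine_similarity_transitive (n : ℕ)
    (v w z : EuclideanSpace ℝ (Fin n))
    (hv : v ≠ 0) (hw : w ≠ 0) (hz : z ≠ 0)
    (hvpos : ∀ i, 0 ≤ v i) (hwpos : ∀ i, 0 ≤ w i) (hzpos : ∀ i, 0 ≤ z i) :
    ⟪v, z⟫ / (‖v‖ * ‖z‖) ≥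
      ⟪w, z⟫ / (‖w‖ * ‖z‖) - Real.sqrt (1 - (⟪v, w⟫ / (‖v‖ * ‖w‖)) ^ 2) := by
  have hvn : (0:ℝ) < ‖v‖ := norm_pos_iff.mpr hv
  have hwn : (0:ℝ) < ‖w‖ := norm_pos_iff.mpr hw
  have hzn : (0:ℝ) < ‖z‖ := norm_pos_iff.mpr hz
  set v' := ‖v‖⁻¹ • v with hv'
  set w' := ‖w‖⁻¹ • w with hw'
  set z' := ‖z‖⁻¹ • z with hz'
  have hv1 : ‖v'‖ = 1 := norm_smul_inv_norm hv
  have hw1 : ‖w'‖ = 1 := norm_smul_inv_norm hw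
  have hz1 : ‖z'‖ = 1 := norm_smul_inv_norm hz
  have inner_eq : ∀ (x y : EuclideanSpace ℝ (Fin n)),
      ⟪(‖x‖⁻¹ • x : EuclideanSpace ℝ (Fin n)), ‖y‖⁻¹ • y⟫ = ⟪x, y⟫ / (‖x‖ * ‖y‖) := by
    intro x y
    rw [real_inner_smul_left, real_inner_smul_right]
    field_simp
  have inner_nonneg : ∀ (x y : EuclideanSpace ℝ (Fin n)),
      (∀ i, 0 ≤ x i) → (∀ i, 0 ≤ y i) → 0 ≤ ⟪x, y⟫ := by
    intro x y hx hy
    rw [PiLp.inner_apply]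
    apply Finset.sum_nonneg
    intro i _
    simpa using mul_nonneg (hy i) (hx i)
  set a := ⟪v, w⟫ / (‖v‖ * ‖w‖) with ha
  set b := ⟪w, z⟫ / (‖w‖ * ‖z‖) with hb
  set c := ⟪v, z⟫ / (‖v‖ * ‖z‖) with hc
  have havw : ⟪v', w'⟫ = a := inner_eq v w
  have hbwz : ⟪w', z'⟫ = b := inner_eq w z
  have hcvz : ⟪v', z'⟫ = c := inner_eq v z
  have hkey := gram_key v' w' z' hv1 hw1 hz1
  rw [havw, hbwz, hcvz] at hkey
  -- nonnegativity and bounds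
  have ha0 : 0 ≤ a := div_nonneg (inner_nonneg v w hvpos hwpos)
    (le_of_lt (mul_pos hvn hwn))
  have hb0 : 0 ≤ b := div_nonneg (inner_nonneg w z hwpos hzpos)
    (le_of_lt (mul_pos hwn hzn))
  have hc0 : 0 ≤ c := div_nonneg (inner_nonneg v z hvpos hzpos)
    (le_of_lt (mul_pos hvn hzn))
  have ha1 : a ≤ 1 := by
    rw [ha, div_le_one (mul_pos hvn hwn)]
    exact real_inner_le_norm v w
  have hb1 : b ≤ 1 := by
    rw [hb, div_le_one (mul_pos hwn hzn)]
    exact real_inner_le_norm w z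
  exact alg_key a b c (Real.sqrt (1 - a ^ 2)) (Real.sqrt (1 - b ^ 2)) ha0 ha1 hb0 hb1
    hc0 (Real.sqrt_nonneg _) (Real.sqrt_nonneg _)
    (Real.sq_sqrt (by nlinarith [ha0, ha1])) (Real.sq_sqrt (by nlinarith [hb0, hb1])) hkey
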